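/- Let n ≥ 2 and let f be an (n-1)-times differentiable function on [a,b] with f⁽ⁱ⁾ ≥ 0 for i = 0,…,n-2. Let g belong to D₊[a,b] or D₋[a,b] be strictly positive and increasing, and let α > n be a real number. Suppose that g^{α-n}·f⁽ⁿ⁻¹⁾ ≥ (n!/(n-1))·f on [a,b]. Then (b-a)·f(a)ⁿ·g(a)^{α} + (∫_a^b f·g)ⁿ ≤ ∫_a^b fⁿ·g^{α}. -/

import Mathlib

open Set MeasureTheory intervalIntegral

private lemma nonneg_of_deriv_aux {c d : ℝ} (hcd : c ≤ d) (φ φ' : ℝ → ℝ)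
    (hcont : ContinuousOn φ (Set.Icc c d))
    (hder : ∀ x ∈ Set.Ioo c d, HasDerivAt φ (φ' x) x)
    (hpos : ∀ x ∈ Set.Ioo c d, 0 ≤ φ' x)
    (h0 : 0 ≤ φ c) : ∀ x ∈ Set.Icc c d, 0 ≤ φ x := by
  have hmono : MonotoneOn φ (Set.Icc c d) := by
    apply monotoneOn_of_deriv_nonneg (convex_Icc c d) hcont
    · intro x hx
      rw [interior_Icc] at hx
      exact (hder x hx).differentiableAt.differentiableWithinAt
    · intro x hx
      rw [interior_Icc] at hx
      rw [(hder x hx).deriv]; exact hpos x hx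
  intro x hx
  exact le_trans h0 (hmono (left_mem_Icc.2 hcd) hx hx.1)



/-- `D₊[a,b]`: continuous functions on `[a,b]` having a right-derivative at every
point of `(a,b)`. -/
def DPlus (a b : ℝ) (h : ℝ → ℝ) : Prop :=
  ContinuousOn h (Set.Icc a b) ∧ ∀ x ∈ Set.Ioo a b, ∃ L : ℝ, HasDerivWithinAt h L (Set.Ioi x) x

/-- `D₋[a,b]`: continuous functions on `[a,b]` having a left-derivative at every
point of `(a,b)`. -/
def DMinus (a b : ℝ) (h : ℝ → ℝ) : Prop :=
  ContinuousOn h (Set.Icc a b) ∧ ∀ x ∈ Set.Ioo a b, ∃ L : ℝ, HasDerivWithinAt h L (Set.Iio x) x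

set_option maxHeartbeats 2000000 in
theorem stmt13 (a b : ℝ) (hab : a < b) (n : ℕ) (hn : 2 ≤ n)
    (f : ℝ → ℝ)
    (hf_diff : ∀ i < n - 1,
      DifferentiableOn ℝ (iteratedDerivWithin i f (Set.Icc a b)) (Set.Icc a b))
    (hf_nonneg : ∀ i ≤ n - 2, ∀ x ∈ Set.Icc a b,
      0 ≤ iteratedDerivWithin i f (Set.Icc a b) x)
    (g : ℝ → ℝ) (hD : DPlus a b g ∨ DMinus a b g)
    (hg_pos : ∀ x ∈ Set.Icc a b, 0 < g x)
    (hg_mono : MonotoneOn g (Set.Icc a b))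
    (α : ℝ) (hα : (n : ℝ) < α)
    (hgrowth : ∀ x ∈ Set.Icc a b,
      ((n.factorial : ℝ) / ((n : ℝ) - 1)) * f x ≤
        g x ^ (α - (n : ℝ)) * iteratedDerivWithin (n - 1) f (Set.Icc a b) x) :
    (b - a) * f a ^ n * g a ^ α + (∫ x in a..b, f x * g x) ^ n ≤
      ∫ x in a..b, f x ^ n * g x ^ α := by
  obtain ⟨m, rfl⟩ : ∃ m, n = m + 2 := ⟨n - 2, by omega⟩
  clear hn
  set s : Set ℝ := Set.Icc a b with hs_def
  set D : ℕ → ℝ → ℝ := fun i => iteratedDerivWithin i f s with hD_def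
  set K : ℝ := ((m+2).factorial : ℝ) / (((m+2 : ℕ) : ℝ) - 1) with hK_def
  set ν : ℝ := α - ((m+2 : ℕ) : ℝ) with hν_def
  have hgc : ContinuousOn g s := hD.elim (·.1) (·.1)
  have hν : 0 < ν := by
    have : ((m+2 : ℕ) : ℝ) < α := hα
    simp only [hν_def]; linarith
  have hα0 : (0:ℝ) ≤ α := by
    have : ((m+2 : ℕ) : ℝ) < α := hα
    push_cast at this; linarith
  have hKval : K = ((m+2) : ℝ) * (m.factorial : ℝ) := by
    have h1 : ((m+2).factorial : ℝ) = ((m+2) : ℝ) * (((m+1) : ℝ) * (m.factorial : ℝ)) := by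
      rw [show m + 2 = (m+1) + 1 from rfl, Nat.factorial_succ, Nat.factorial_succ]
      push_cast; ring
    rw [hK_def, h1]
    have h2 : (((m+2 : ℕ) : ℝ) - 1) = ((m+1 : ℕ) : ℝ) := by push_cast; ring
    rw [h2]
    field_simp
    push_cast; ring
  have hKpos : 0 < K := by rw [hKval]; positivity
  -- facts about f and its derivatives
  have hf_diff' : ∀ i ≤ m, DifferentiableOn ℝ (D i) s := fun i hi => hf_diff i (by omega)
  have hD0 : D 0 = f := by rw [hD_def]; exact iteratedDerivWithin_zero
  have hfc : ContinuousOn f s := by rw [← hD0]; exact (hf_diff' 0 (by omega)).continuousOn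
  have hDc : ∀ i ≤ m, ContinuousOn (D i) s := fun i hi => (hf_diff' i hi).continuousOn
  have hD1 : ∀ i ≤ m, ∀ x ∈ Set.Ioo a b, HasDerivAt (D i) (D (i+1) x) x := by
    intro i hi x hx
    have hxI : x ∈ s := Set.Ioo_subset_Icc_self hx
    have hnb : s ∈ nhds x := Icc_mem_nhds hx.1 hx.2
    have h2 := (((hf_diff' i hi) x hxI).hasDerivWithinAt).hasDerivAt hnb
    have e : D (i+1) x = derivWithin (D i) s x :=
      congrFun iteratedDerivWithin_succ x
    rw [e]; exact h2
  have hfd : ∀ x ∈ Set.Ioo a b, HasDerivAt f (D 1 x) x := by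
    intro x hx
    have := hD1 0 (by omega) x hx
    rwa [hD0] at this
  have hgrow : ∀ x ∈ s, K * f x ≤ g x ^ ν * D (m+1) x := by
    intro x hx
    have h := hgrowth x hx
    rwa [show m + 2 - 1 = m + 1 from rfl] at h
  have hfnn : ∀ x ∈ s, 0 ≤ f x := by
    have h := hf_nonneg 0 (by omega)
    rwa [show iteratedDerivWithin 0 f (Set.Icc a b) = f from iteratedDerivWithin_zero] at h
  have hDnn : ∀ i ≤ m + 1, ∀ x ∈ s, 0 ≤ D i x := by
    intro i hi x hx
    rcases Nat.lt_or_ge i (m+1) with h | h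
    · exact hf_nonneg i (by omega) x hx
    · have hi' : i = m + 1 := by omega
      subst hi'
      have h1 := hgrow x hx
      have h2 : 0 < g x ^ ν := Real.rpow_pos_of_pos (hg_pos x hx) ν
      nlinarith [hfnn x hx]
  -- FTC helpers
  have FTCc : ∀ h : ℝ → ℝ, ContinuousOn h s →
      ContinuousOn (fun y => ∫ t in a..y, h t) s := by
    intro h hc
    have hint : IntegrableOn h (Set.uIcc a b) := by
      rw [Set.uIcc_of_le hab.le]; exact hc.integrableOn_Icc
    have h2 := intervalIntegral.continuousOn_primitive_interval (μ := volume) hint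
    rwa [Set.uIcc_of_le hab.le] at h2
  have FTCd : ∀ h : ℝ → ℝ, ContinuousOn h s →
      ∀ x ∈ Set.Ioo a b, HasDerivAt (fun y => ∫ t in a..y, h t) (h x) x := by
    intro h hc x hx
    have hci : ContinuousAt h x := hc.continuousAt (Icc_mem_nhds hx.1 hx.2)
    have hmeas : StronglyMeasurableAtFilter h (nhds x) volume :=
      ContinuousOn.stronglyMeasurableAtFilter isOpen_Ioo (hc.mono Set.Ioo_subset_Icc_self) x hx
    have hint : IntervalIntegrable h volume a x :=
      (hc.mono (Set.Icc_subset_Icc_right hx.2.le)).intervalIntegrable_of_Icc hx.1.le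
    exact intervalIntegral.integral_hasDerivAt_right hint hmeas hci
  -- iterated integrals
  set E : ℕ → ℝ → ℝ := fun j => Nat.rec f (fun _ Ej x => ∫ t in a..x, Ej t) j with hE_def
  have hE_succ : ∀ j x, E (j+1) x = ∫ t in a..x, E j t := fun j x => rfl
  have hE0 : E 0 = f := rfl
  have hEa : ∀ j, E (j+1) a = 0 := by
    intro j; rw [hE_succ]; exact intervalIntegral.integral_same
  have hEcn : ∀ j, ContinuousOn (E j) s ∧ ∀ x ∈ s, 0 ≤ E j x := by
    intro j
    induction j with
    | zero => exact ⟨hfc, hfnn⟩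
    | succ j ih =>
      refine ⟨FTCc (E j) ih.1, ?_⟩
      intro x hx
      rw [hE_succ]
      apply intervalIntegral.integral_nonneg hx.1
      intro t ht; exact ih.2 t ⟨ht.1, le_trans ht.2 hx.2⟩
  have hEd : ∀ j, ∀ x ∈ Set.Ioo a b, HasDerivAt (E (j+1)) (E j x) x :=
    fun j => FTCd (E j) (hEcn j).1
  -- monotonicity of f
  have hfmono : MonotoneOn f s := by
    apply monotoneOn_of_deriv_nonneg (convex_Icc a b) hfc
    · intro x hx
      rw [interior_Icc] at hx
      exact (hfd x hx).differentiableAt.differentiableWithinAt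
    · intro x hx
      rw [interior_Icc] at hx
      rw [(hfd x hx).deriv]
      exact hDnn 1 (by omega) x (Set.Ioo_subset_Icc_self hx)
  -- the classical iterated-integral inequality: F^(k+1) ≤ (k+1)! f^k E_(k+1)
  have hCm : ∀ k, ∀ x ∈ s, E 1 x ^ (k+1) ≤ ((k+1).factorial : ℝ) * f x ^ k * E (k+1) x := by
    intro k
    induction k with
    | zero =>
      intro x hx
      simp [Nat.factorial]
    | succ k ih =>
      have haux := nonneg_of_deriv_aux hab.le
        (fun x => ((k+2).factorial : ℝ) * f x ^ (k+1) * E (k+2) x - E 1 x ^ (k+2))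
        (fun x => ((k+2).factorial : ℝ) * ((((k:ℝ)+1) * f x ^ k * D 1 x) * E (k+2) x
            + f x ^ (k+1) * E (k+1) x) - ((k:ℝ)+2) * E 1 x ^ (k+1) * f x)
        ?_ ?_ ?_ ?_
      · intro x hx
        have h : 0 ≤ ((k+2).factorial : ℝ) * f x ^ (k+1) * E (k+2) x - E 1 x ^ (k+2) :=
          haux x hx
        show E 1 x ^ (k+2) ≤ ((k+2).factorial : ℝ) * f x ^ (k+1) * E (k+2) x
        linarith
      · apply ContinuousOn.sub
        · exact (continuousOn_const.mul (hfc.pow (k+1))).mul (hEcn (k+2)).1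
        · exact ((hEcn 1).1.pow (k+2))
      · intro x hx
        have h1 : HasDerivAt (fun x => f x ^ (k+1)) ((((k:ℝ))+1) * f x ^ k * D 1 x) x := by
          have := (hfd x hx).fun_pow (k+1)
          exact this.congr_deriv (by push_cast; ring_nf)
        have h2 : HasDerivAt (fun x => ((k+2).factorial : ℝ) * f x ^ (k+1) * E (k+2) x)
            (((k+2).factorial : ℝ) * ((((k:ℝ)+1) * f x ^ k * D 1 x) * E (k+2) x
              + f x ^ (k+1) * E (k+1) x)) x := by
          have hmul := ((h1.const_mul ((k+2).factorial : ℝ)).fun_mul (hEd (k+1) x hx))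
          exact hmul.congr_deriv (by ring)
        have hE1d : HasDerivAt (E 1) (f x) x := by
          have h := hEd 0 x hx
          rwa [hE0] at h
        have h3 : HasDerivAt (fun x => E 1 x ^ (k+2)) (((k:ℝ)+2) * E 1 x ^ (k+1) * f x) x := by
          have h := hE1d.fun_pow (k+2)
          exact h.congr_deriv (by push_cast; ring_nf)
        exact h2.sub h3
      · intro x hx
        have hxs : x ∈ s := Set.Ioo_subset_Icc_self hx
        have hfk := ih x hxs
        have hf0 := hfnn x hxs
        have hd0 := hDnn 1 (by omega) x hxs
        have hE2 := (hEcn (k+2)).2 x hxs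
        have hE1 := (hEcn (k+1)).2 x hxs
        have hfac : ((k+2).factorial : ℝ) = ((k:ℝ)+2) * ((k+1).factorial : ℝ) := by
          rw [show k + 2 = (k+1)+1 from rfl, Nat.factorial_succ]
          push_cast; ring
        have key : ((k:ℝ)+2) * E 1 x ^ (k+1) * f x ≤ ((k+2).factorial : ℝ) * (f x ^ (k+1) * E (k+1) x) := by
          have step : E 1 x ^ (k+1) * f x ≤ (((k+1).factorial : ℝ) * f x ^ k * E (k+1) x) * f x :=
            mul_le_mul_of_nonneg_right hfk hf0
          calc ((k:ℝ)+2) * E 1 x ^ (k+1) * f x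
              ≤ ((k:ℝ)+2) * ((((k+1).factorial : ℝ) * f x ^ k * E (k+1) x) * f x) := by
                nlinarith [step]
            _ = ((k+2).factorial : ℝ) * (f x ^ (k+1) * E (k+1) x) := by
                rw [hfac]; ring
        have hprod : 0 ≤ ((k+2).factorial : ℝ) * ((((k:ℝ)+1) * f x ^ k * D 1 x) * E (k+2) x) := by
          have h1 : (0:ℝ) ≤ ((k:ℝ)+1) * f x ^ k * D 1 x :=
            mul_nonneg (mul_nonneg (by positivity) (pow_nonneg hf0 k)) hd0
          exact mul_nonneg (Nat.cast_nonneg _) (mul_nonneg h1 hE2)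
        show 0 ≤ ((k+2).factorial : ℝ) * ((((k:ℝ)+1) * f x ^ k * D 1 x) * E (k+2) x
            + f x ^ (k+1) * E (k+1) x) - ((k:ℝ)+2) * E 1 x ^ (k+1) * f x
        nlinarith [key, hprod]
      · have e1 : E (k+2) a = 0 := hEa (k+1)
        have e2 : E 1 a = 0 := hEa 0
        simp [e1, e2]
  -- key pointwise inequality
  have key : ∀ x₀ ∈ Set.Ioo a b,
      f a ^ (m+2) * g a ^ α + (((m+2):ℕ):ℝ) * (∫ t in a..x₀, f t * g t) ^ (m+1) * (f x₀ * g x₀)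
        ≤ f x₀ ^ (m+2) * g x₀ ^ α := by
    intro x₀ hx₀
    have hax₀ : a ≤ x₀ := hx₀.1.le
    have hx₀b : x₀ ≤ b := hx₀.2.le
    have hx₀s : x₀ ∈ s := Set.Ioo_subset_Icc_self hx₀
    have has : a ∈ s := Set.left_mem_Icc.2 hab.le
    have hIcc_sub : Set.Icc a x₀ ⊆ s := Set.Icc_subset_Icc_right hx₀b
    have hIoo_sub : Set.Ioo a x₀ ⊆ Set.Ioo a b := Set.Ioo_subset_Ioo_right hx₀b
    set C : ℝ := g x₀ ^ ν with hC_def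
    have hCpos : 0 < C := Real.rpow_pos_of_pos (hg_pos x₀ hx₀s) ν
    have hfrozen : ∀ t ∈ Set.Icc a x₀, K * f t ≤ C * D (m+1) t := by
      intro t ht
      have hts : t ∈ s := hIcc_sub ht
      have h1 := hgrow t hts
      have h2 : g t ^ ν ≤ C :=
        Real.rpow_le_rpow (hg_pos t hts).le (hg_mono hts hx₀s ht.2) hν.le
      have h3 := hDnn (m+1) le_rfl t hts
      nlinarith
    have hpsi : ∀ j, j ≤ m → ∀ t ∈ Set.Icc a x₀, K * E j t ≤ C * D (m+1-j) t := by
      intro j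
      induction j with
      | zero => intro _ t ht; exact hfrozen t ht
      | succ j ih =>
        intro hj t ht
        have hj' : j ≤ m := by omega
        have e1 : m + 1 - (j+1) = m - j := by omega
        have e2 : m - j + 1 = m + 1 - j := by omega
        have hmj : m - j ≤ m := by omega
        have haux := nonneg_of_deriv_aux hax₀
          (fun t => C * D (m-j) t - K * E (j+1) t)
          (fun t => C * D (m-j+1) t - K * E j t)
          ?_ ?_ ?_ ?_
        · have h : 0 ≤ C * D (m-j) t - K * E (j+1) t := haux t ht
          rw [e1]
          linarith
        · exact (continuousOn_const.mul ((hDc (m-j) hmj).mono hIcc_sub)).sub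
            (continuousOn_const.mul ((hEcn (j+1)).1.mono hIcc_sub))
        · intro x hx
          exact ((hD1 (m-j) hmj x (hIoo_sub hx)).const_mul C).sub
            ((hEd j x (hIoo_sub hx)).const_mul K)
        · intro x hx
          have hihx := ih hj' x ⟨hx.1.le, hx.2.le⟩
          show 0 ≤ C * D (m-j+1) x - K * E j x
          rw [e2]
          linarith
        · show 0 ≤ C * D (m-j) a - K * E (j+1) a
          have hE0a : E (j+1) a = 0 := hEa j
          rw [hE0a]
          have := hDnn (m-j) (by omega) a has
          nlinarith
    have hY : ∀ t ∈ Set.Icc a x₀, (((m+2):ℕ):ℝ) * (f t * E 1 t ^ m) ≤ C * (f t ^ m * D 1 t) := by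
      rcases Nat.eq_zero_or_pos m with hm | hm
      · subst hm
        intro t ht
        have h' : K * f t ≤ C * D 1 t := by
          have h := hpsi 0 (le_refl 0) t ht
          rwa [show (0:ℕ)+1-0 = 1 from rfl, hE0] at h
        have hKv : K = 2 := by rw [hKval]; norm_num [Nat.factorial]
        rw [hKv] at h'
        show (((2:ℕ)):ℝ) * (f t * E 1 t ^ 0) ≤ C * (f t ^ 0 * D 1 t)
        simp only [pow_zero, mul_one, one_mul]
        push_cast
        linarith
      · obtain ⟨k, rfl⟩ : ∃ k, m = k + 1 := ⟨m-1, by omega⟩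
        intro t ht
        have hts : t ∈ s := hIcc_sub ht
        have h1 := hCm k t hts
        have h2 := hpsi (k+1) le_rfl t ht
        rw [show k + 1 + 1 - (k+1) = 1 from by omega] at h2
        have hf0 := hfnn t hts
        have hfk : (0:ℝ) ≤ f t ^ (k+1) := pow_nonneg hf0 _
        have s1 : f t * E 1 t ^ (k+1) ≤ f t * (((k+1).factorial : ℝ) * f t ^ k * E (k+1) t) :=
          mul_le_mul_of_nonneg_left h1 hf0
        have s2 : f t ^ (k+1) * (K * E (k+1) t) ≤ f t ^ (k+1) * (C * D 1 t) :=
          mul_le_mul_of_nonneg_left h2 hfk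
        calc (((k+1+2:ℕ)):ℝ) * (f t * E 1 t ^ (k+1))
            ≤ (((k+1+2:ℕ)):ℝ) * (f t * (((k+1).factorial : ℝ) * f t ^ k * E (k+1) t)) := by
              have hc : (0:ℝ) ≤ (((k+1+2:ℕ)):ℝ) := by positivity
              exact mul_le_mul_of_nonneg_left s1 hc
          _ = f t ^ (k+1) * (K * E (k+1) t) := by
              rw [hKval]; push_cast; ring
          _ ≤ f t ^ (k+1) * (C * D 1 t) := s2
          _ = C * (f t ^ (k+1) * D 1 t) := by ring
    have hΩ : (((m+2):ℕ):ℝ) * E 1 x₀ ^ (m+1) ≤ C * (f x₀ ^ (m+1) - f a ^ (m+1)) := by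
      have haux := nonneg_of_deriv_aux hax₀
        (fun x => C * (f x ^ (m+1) - f a ^ (m+1)) - (((m+2):ℕ):ℝ) * E 1 x ^ (m+1))
        (fun x => C * (((m:ℝ)+1) * f x ^ m * D 1 x)
          - (((m+2):ℕ):ℝ) * (((m:ℝ)+1) * E 1 x ^ m * f x))
        ?_ ?_ ?_ ?_
      · have h : 0 ≤ C * (f x₀ ^ (m+1) - f a ^ (m+1)) - (((m+2):ℕ):ℝ) * E 1 x₀ ^ (m+1) :=
          haux x₀ (Set.right_mem_Icc.2 hax₀)
        linarith
      · apply ContinuousOn.sub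
        · exact continuousOn_const.mul (((hfc.mono hIcc_sub).pow (m+1)).sub continuousOn_const)
        · exact continuousOn_const.mul (((hEcn 1).1.mono hIcc_sub).pow (m+1))
      · intro x hx
        have hx' := hIoo_sub hx
        have hfp : HasDerivAt (fun x => f x ^ (m+1) - f a ^ (m+1))
            (((m:ℝ)+1) * f x ^ m * D 1 x) x := by
          have h := ((hfd x hx').fun_pow (m+1)).sub_const (f a ^ (m+1))
          exact h.congr_deriv (by push_cast; ring_nf)
        have hE1d : HasDerivAt (E 1) (f x) x := by
          have h := hEd 0 x hx'
          rwa [hE0] at h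
        have hEp : HasDerivAt (fun x => E 1 x ^ (m+1)) (((m:ℝ)+1) * E 1 x ^ m * f x) x := by
          have h := hE1d.fun_pow (m+1)
          exact h.congr_deriv (by push_cast; ring_nf)
        exact (hfp.const_mul C).sub (hEp.const_mul (((m+2):ℕ):ℝ))
      · intro x hx
        have hYx := hY x ⟨hx.1.le, hx.2.le⟩
        show 0 ≤ C * (((m:ℝ)+1) * f x ^ m * D 1 x)
          - (((m+2):ℕ):ℝ) * (((m:ℝ)+1) * E 1 x ^ m * f x)
        have hm1 : (0:ℝ) ≤ (m:ℝ)+1 := by positivity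
        have := mul_le_mul_of_nonneg_left hYx hm1
        nlinarith [this]
      · show 0 ≤ C * (f a ^ (m+1) - f a ^ (m+1)) - (((m+2):ℕ):ℝ) * E 1 a ^ (m+1)
        have hE1a : E 1 a = 0 := hEa 0
        rw [hE1a, zero_pow (by omega : m+1 ≠ 0)]
        simp
    -- assemble the pointwise bound
    have hFnn : 0 ≤ E 1 x₀ := (hEcn 1).2 x₀ hx₀s
    have hgx₀ : 0 < g x₀ := hg_pos x₀ hx₀s
    have hint1 : IntervalIntegrable (fun t => f t * g t) volume a x₀ :=
      ((hfc.mul hgc).mono hIcc_sub).intervalIntegrable_of_Icc hax₀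
    have hint2 : IntervalIntegrable (fun t => g x₀ * f t) volume a x₀ :=
      (continuousOn_const.mul (hfc.mono hIcc_sub)).intervalIntegrable_of_Icc hax₀
    have hugF : (∫ t in a..x₀, f t * g t) ≤ g x₀ * E 1 x₀ := by
      have h := intervalIntegral.integral_mono_on hax₀ hint1 hint2 ?_
      · calc (∫ t in a..x₀, f t * g t) ≤ ∫ t in a..x₀, g x₀ * f t := h
          _ = g x₀ * ∫ t in a..x₀, f t := intervalIntegral.integral_const_mul _ _
          _ = g x₀ * E 1 x₀ := rfl
      · intro t ht
        have hts : t ∈ s := hIcc_sub ht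
        have := hg_mono hts hx₀s ht.2
        nlinarith [hfnn t hts, hg_pos t hts]
    have hunn : (0:ℝ) ≤ ∫ t in a..x₀, f t * g t := by
      apply intervalIntegral.integral_nonneg hax₀
      intro t ht
      have hts : t ∈ s := hIcc_sub ht
      exact mul_nonneg (hfnn t hts) (hg_pos t hts).le
    have hpow : (∫ t in a..x₀, f t * g t) ^ (m+1) ≤ (g x₀ * E 1 x₀) ^ (m+1) :=
      pow_le_pow_left₀ hunn hugF (m+1)
    have hfa : f a ≤ f x₀ := hfmono has hx₀s hax₀
    have hfa0 : 0 ≤ f a := hfnn a has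
    have hsplit : g x₀ ^ α = C * g x₀ ^ (m+2) := by
      rw [hC_def, ← Real.rpow_natCast (g x₀) (m+2), ← Real.rpow_add hgx₀]
      congr 1
      rw [hν_def]; push_cast; ring
    have hga : g a ^ α ≤ g x₀ ^ α :=
      Real.rpow_le_rpow (hg_pos a has).le (hg_mono has hx₀s hax₀) hα0
    have hstep1 : (((m+2):ℕ):ℝ) * (∫ t in a..x₀, f t * g t) ^ (m+1) * (f x₀ * g x₀)
        ≤ g x₀ ^ (m+2) * ((((m+2):ℕ):ℝ) * E 1 x₀ ^ (m+1) * f x₀) := by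
      have h1 : (∫ t in a..x₀, f t * g t) ^ (m+1) * (f x₀ * g x₀)
          ≤ (g x₀ * E 1 x₀) ^ (m+1) * (f x₀ * g x₀) :=
        mul_le_mul_of_nonneg_right hpow (mul_nonneg (hfnn x₀ hx₀s) hgx₀.le)
      have hc : (0:ℝ) ≤ (((m+2):ℕ):ℝ) := by positivity
      calc (((m+2):ℕ):ℝ) * (∫ t in a..x₀, f t * g t) ^ (m+1) * (f x₀ * g x₀)
          = (((m+2):ℕ):ℝ) * ((∫ t in a..x₀, f t * g t) ^ (m+1) * (f x₀ * g x₀)) := by ring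
        _ ≤ (((m+2):ℕ):ℝ) * ((g x₀ * E 1 x₀) ^ (m+1) * (f x₀ * g x₀)) :=
            mul_le_mul_of_nonneg_left h1 hc
        _ = g x₀ ^ (m+2) * ((((m+2):ℕ):ℝ) * E 1 x₀ ^ (m+1) * f x₀) := by
            rw [mul_pow]; ring
    have hstep2 : (((m+2):ℕ):ℝ) * E 1 x₀ ^ (m+1) * f x₀ ≤ C * (f x₀ ^ (m+2) - f a ^ (m+2)) := by
      have h1 : (((m+2):ℕ):ℝ) * E 1 x₀ ^ (m+1) * f x₀
          ≤ (C * (f x₀ ^ (m+1) - f a ^ (m+1))) * f x₀ :=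
        mul_le_mul_of_nonneg_right hΩ (hfnn x₀ hx₀s)
      have h2 : f a ^ (m+1) * f a ≤ f a ^ (m+1) * f x₀ :=
        mul_le_mul_of_nonneg_left hfa (pow_nonneg hfa0 _)
      have hC2 := mul_le_mul_of_nonneg_left h2 hCpos.le
      have h1' : C * (f x₀ ^ (m+1) - f a ^ (m+1)) * f x₀
          = C * f x₀ ^ (m+2) - C * (f a ^ (m+1) * f x₀) := by ring
      have e2 : C * (f a ^ (m+1) * f a) = C * f a ^ (m+2) := by ring
      linarith [h1, hC2, h1', e2]
    have hfin : g x₀ ^ (m+2) * (C * (f x₀ ^ (m+2) - f a ^ (m+2)))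
        = g x₀ ^ α * f x₀ ^ (m+2) - g x₀ ^ α * f a ^ (m+2) := by
      rw [hsplit]; ring
    have hga' : f a ^ (m+2) * g a ^ α ≤ f a ^ (m+2) * g x₀ ^ α :=
      mul_le_mul_of_nonneg_left hga (pow_nonneg hfa0 _)
    have hgpow_nn : (0:ℝ) ≤ g x₀ ^ (m+2) := by positivity
    have hstep3 := mul_le_mul_of_nonneg_left hstep2 hgpow_nn
    nlinarith [hstep1, hstep3, hfin, hga']
  -- final comparison
  have hfg_cont : ContinuousOn (fun t => f t * g t) s := hfc.mul hgc
  have hpw_cont : ContinuousOn (fun t => f t ^ (m+2) * g t ^ α) s :=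
    (hfc.pow (m+2)).mul (hgc.rpow_const (fun x hx => Or.inl (hg_pos x hx).ne'))
  have hu_cont := FTCc _ hfg_cont
  have hw_cont := FTCc _ hpw_cont
  have hΦd : ∀ x ∈ Set.Ioo a b, HasDerivAt
      (fun y => (y - a) * f a ^ (m+2) * g a ^ α + (∫ t in a..y, f t * g t) ^ (m+2)
        - ∫ t in a..y, f t ^ (m+2) * g t ^ α)
      (f a ^ (m+2) * g a ^ α + (((m+2):ℕ):ℝ) * (∫ t in a..x, f t * g t) ^ (m+1) * (f x * g x)
        - f x ^ (m+2) * g x ^ α) x := by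
    intro x hx
    have h1 : HasDerivAt (fun y => (y - a) * f a ^ (m+2) * g a ^ α) (f a ^ (m+2) * g a ^ α) x := by
      have h := (((hasDerivAt_id x).sub_const a).mul_const (f a ^ (m+2))).mul_const (g a ^ α)
      exact h.congr_deriv (by ring)
    have h2 : HasDerivAt (fun y => (∫ t in a..y, f t * g t) ^ (m+2))
        ((((m+2):ℕ):ℝ) * (∫ t in a..x, f t * g t) ^ (m+1) * (f x * g x)) x := by
      have h := (FTCd _ hfg_cont x hx).pow (m+2)
      rw [show m + 2 - 1 = m + 1 from rfl] at h
      exact h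
    have h3 := FTCd _ hpw_cont x hx
    exact (h1.add h2).sub h3
  have hanti : AntitoneOn (fun y => (y - a) * f a ^ (m+2) * g a ^ α
      + (∫ t in a..y, f t * g t) ^ (m+2) - ∫ t in a..y, f t ^ (m+2) * g t ^ α) s := by
    apply antitoneOn_of_deriv_nonpos (convex_Icc a b)
    · apply ContinuousOn.sub
      · apply ContinuousOn.add
        · exact ((continuousOn_id.sub continuousOn_const).mul continuousOn_const).mul
            continuousOn_const
        · exact hu_cont.pow (m+2)
      · exact hw_cont
    · intro x hx
      rw [interior_Icc] at hx
      exact (hΦd x hx).differentiableAt.differentiableWithinAt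
    · intro x hx
      rw [interior_Icc] at hx
      rw [(hΦd x hx).deriv]
      have := key x hx
      linarith
  have hΦba := hanti (Set.left_mem_Icc.2 hab.le) (Set.right_mem_Icc.2 hab.le) hab.le
  have hΦba' : (b - a) * f a ^ (m+2) * g a ^ α + (∫ t in a..b, f t * g t) ^ (m+2)
      - (∫ t in a..b, f t ^ (m+2) * g t ^ α)
      ≤ (a - a) * f a ^ (m+2) * g a ^ α + (∫ t in a..a, f t * g t) ^ (m+2)
      - (∫ t in a..a, f t ^ (m+2) * g t ^ α) := hΦba
  rw [intervalIntegral.integral_same, intervalIntegral.integral_same,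
    zero_pow (by omega : m+2 ≠ 0)] at hΦba'
  linarith [hΦba']
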